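/- Let (λ_n)_{n∈ℤ} be a sequence of negative reals with λ_{n-1} = λ_n(5 - λ_n) and λ_n → -∞ as n → -∞. Define c_n = 1 - λ_n/4, s_n = (-λ_n/4)·Π_{k=0}^∞ (1 + 4/(2 - λ_{n-k})), and e_n = c_n - s_n. Then lim_{n→-∞} λ_n · e_n = -1. -/

import Mathlib

open Filter Real

private lemma geom_decay (L : ℤ → ℝ) (hLneg : ∀ n, L n < 0)
    (hLrec : ∀ n, L (n - 1) = L n * (5 - L n)) (m : ℤ) :
    ∀ k : ℕ, L (m - k) ≤ 5 ^ k * L m := by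
  intro k
  induction k with
  | zero => simp
  | succ k ih =>
    have hidx : (m - ((k : ℤ) + 1)) = (m - (k : ℤ)) - 1 := by ring
    have h1 : L (m - ((k : ℤ) + 1)) = L (m - (k : ℤ)) * (5 - L (m - (k : ℤ))) := by
      rw [hidx, hLrec]
    have h2 := hLneg (m - (k : ℤ))
    have h3 : (0 : ℝ) < 5 ^ k := by positivity
    have : ((k + 1 : ℕ) : ℤ) = (k : ℤ) + 1 := by push_cast; ring
    rw [this, h1, pow_succ]
    nlinarith [sq_nonneg (L (m - (k : ℤ)))]

private noncomputable def phiAux : ℝ → ℝ := fun u =>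
  2 / (2 * u - 1) + 1 / (2 * u ^ 2 - 5 * u + 1)
    + 4 * u / ((2 * u - 1) * (2 * u ^ 2 - 5 * u + 1))

private lemma phiAux_eq {y : ℝ} (hy : y < 0) :
    phiAux y⁻¹ = y * (1 - y / 4)
      + y ^ 2 / 4 * ((1 + 4 / (2 - y)) * (1 + 4 / (2 - y * (5 - y)))) := by
  have h0 : y ≠ 0 := ne_of_lt hy
  have h1 : (2 : ℝ) - y ≠ 0 := by nlinarith
  have h2 : (2 : ℝ) - y * (5 - y) ≠ 0 := by nlinarith [sq_nonneg y]
  rw [phiAux, show 2 * y⁻¹ - 1 = (2 - y) / y by field_simp,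
    show 2 * y⁻¹ ^ 2 - 5 * y⁻¹ + 1 = (2 - y * (5 - y)) / y ^ 2 by field_simp; ring]
  field_simp
  ring

private lemma key_bounds (L : ℤ → ℝ) (hLneg : ∀ n, L n < 0)
    (hLrec : ∀ n, L (n - 1) = L n * (5 - L n)) (n : ℤ) (hn : L n ≤ -5) :
    (1 + 4 / (2 - L n)) * (1 + 4 / (2 - L n * (5 - L n)))
        ≤ (∏' k : ℕ, (1 + 4 / (2 - L (n - k))))
    ∧ (∏' k : ℕ, (1 + 4 / (2 - L (n - k))))
        ≤ (1 + 4 / (2 - L n)) * (1 + 4 / (2 - L n * (5 - L n))) * (1 + 250 / (L n) ^ 4) := by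
  set x : ℕ → ℝ := fun k => 4 / (2 - L (n - (k : ℤ))) with hxdef
  have hpos : ∀ m : ℤ, 0 < 2 - L m := fun m => by linarith [hLneg m]
  have hx0 : ∀ k, 0 < x k := fun k => by
    simp only [hxdef]; exact div_pos (by norm_num) (hpos _)
  have hy : (0 : ℝ) < -L n := by linarith
  -- geometric bound on x
  have hxg : ∀ k, x k ≤ 4 / (-L n) * (1 / 5) ^ k := by
    intro k
    have hg := geom_decay L hLneg hLrec n k
    have h5 : (0 : ℝ) < 5 ^ k := by positivity
    have hb : (5 : ℝ) ^ k * (-L n) ≤ 2 - L (n - (k : ℤ)) := by nlinarith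
    have hbpos : (0 : ℝ) < 5 ^ k * (-L n) := by positivity
    have : x k ≤ 4 / (5 ^ k * (-L n)) := by
      simp only [hxdef]
      rw [div_le_div_iff₀ (hpos _) hbpos]
      nlinarith
    calc x k ≤ 4 / (5 ^ k * (-L n)) := this
      _ = 4 / (-L n) * (1 / 5) ^ k := by
          rw [div_pow, one_pow]; field_simp
  -- summability of logs, hence multipliability
  have hgeo : Summable (fun k : ℕ => 4 / (-L n) * (1 / 5) ^ k) :=
    (summable_geometric_of_lt_one (by norm_num) (by norm_num)).mul_left _
  have hlogsum : Summable (fun k => Real.log (1 + x k)) := by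
    apply Summable.of_nonneg_of_le (fun k => Real.log_nonneg (by linarith [hx0 k]))
      (fun k => ?_) hgeo
    have h1 : Real.log (1 + x k) ≤ (1 + x k) - 1 :=
      Real.log_le_sub_one_of_pos (by linarith [hx0 k])
    have := hxg k
    linarith
  have hmul : Multipliable (fun k => 1 + x k) := by
    exact Real.multipliable_of_summable_log (fun k => by linarith [hx0 k]) hlogsum
  -- monotonicity of finite products of (1 + x k)
  have prodmono : ∀ s F : Finset ℕ, s ⊆ F →
      (∏ k ∈ s, (1 + x k)) ≤ ∏ k ∈ F, (1 + x k) := by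
    intro s F hsF
    rw [← Finset.prod_sdiff hsF]
    have h1 : (1 : ℝ) ≤ ∏ k ∈ F \ s, (1 + x k) := by
      calc (1 : ℝ) = ∏ k ∈ F \ s, (1 : ℝ) := by simp
        _ ≤ ∏ k ∈ F \ s, (1 + x k) :=
            Finset.prod_le_prod (by intros; norm_num) (by intro i _; linarith [hx0 i])
    have h2 : (0 : ℝ) ≤ ∏ k ∈ s, (1 + x k) :=
      Finset.prod_nonneg (by intro i _; linarith [hx0 i])
    nlinarith
  have hprodpair : (∏ k ∈ ({0, 1} : Finset ℕ), (1 + x k)) = (1 + x 0) * (1 + x 1) :=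
    Finset.prod_pair (by norm_num)
  -- lower bound
  have hPlo : (1 + x 0) * (1 + x 1) ≤ ∏' k : ℕ, (1 + x k) := by
    apply ge_of_tendsto hmul.hasProd
    filter_upwards [eventually_ge_atTop ({0, 1} : Finset ℕ)] with F hF
    rw [← hprodpair]
    exact prodmono _ _ hF
  -- tail bounds
  have h25 : (25 : ℝ) ≤ (L n) ^ 2 := by nlinarith
  have h625 : (625 : ℝ) ≤ (L n) ^ 4 := by nlinarith [sq_nonneg ((L n) ^ 2 - 25)]
  have hy4 : (0 : ℝ) < (L n) ^ 4 := by linarith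
  have hL1 : L (n - 1) ≤ -((L n) ^ 2) := by
    have := hLrec n
    nlinarith [hLneg n]
  have hL2 : L (n - 2) ≤ -((L n) ^ 4) := by
    have e2 : L (n - 2) = L (n - 1) * (5 - L (n - 1)) := by
      have := hLrec (n - 1)
      rwa [show n - 1 - 1 = n - 2 from by ring] at this
    have ha : 0 ≤ -(L (n - 1)) - (L n) ^ 2 := by linarith
    have hb : 0 ≤ -(L (n - 1)) + (L n) ^ 2 := by nlinarith [sq_nonneg (L n)]
    have hsq : 0 ≤ (L (n - 1)) ^ 2 - (L n) ^ 4 := by nlinarith [mul_nonneg ha hb]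
    have := hLneg (n - 1)
    nlinarith
  have hx2 : ∀ j : ℕ, x (j + 2) ≤ 100 / (L n) ^ 4 * (1 / 5) ^ (j + 2) := by
    intro j
    have hg := geom_decay L hLneg hLrec (n - 2) j
    have h5j : (0 : ℝ) < 5 ^ j := by positivity
    have hidx : (n - 2 - (j : ℤ)) = n - ((j + 2 : ℕ) : ℤ) := by push_cast; ring
    have hLk : L (n - ((j + 2 : ℕ) : ℤ)) ≤ -(5 ^ j * (L n) ^ 4) := by
      rw [← hidx]
      calc L (n - 2 - (j : ℤ)) ≤ 5 ^ j * L (n - 2) := hg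
        _ ≤ -(5 ^ j * (L n) ^ 4) := by nlinarith
    have hb : 5 ^ j * (L n) ^ 4 ≤ 2 - L (n - ((j + 2 : ℕ) : ℤ)) := by linarith
    have hbpos : (0 : ℝ) < 5 ^ j * (L n) ^ 4 := by positivity
    have h1 : x (j + 2) ≤ 4 / (5 ^ j * (L n) ^ 4) := by
      simp only [hxdef]
      rw [div_le_div_iff₀ (hpos _) hbpos]
      nlinarith
    calc x (j + 2) ≤ 4 / (5 ^ j * (L n) ^ 4) := h1
      _ = 100 / (L n) ^ 4 * (1 / 5) ^ (j + 2) := by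
          rw [div_pow, one_pow]
          field_simp
          ring
  have hgeo2 : Summable (fun k : ℕ => 100 / (L n) ^ 4 * (1 / 5) ^ k) :=
    (summable_geometric_of_lt_one (by norm_num) (by norm_num)).mul_left _
  have htail : ∀ F : Finset ℕ,
      (∑ k ∈ F.filter (fun k => ¬ k < 2), x k) ≤ 125 / (L n) ^ 4 := by
    intro F
    have h1 : (∑ k ∈ F.filter (fun k => ¬ k < 2), x k)
        ≤ ∑ k ∈ F.filter (fun k => ¬ k < 2), 100 / (L n) ^ 4 * (1 / 5) ^ k := by
      apply Finset.sum_le_sum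
      intro k hk
      simp only [Finset.mem_filter, not_lt] at hk
      obtain ⟨j, rfl⟩ : ∃ j, k = j + 2 := ⟨k - 2, by omega⟩
      exact hx2 j
    have h2 : (∑ k ∈ F.filter (fun k => ¬ k < 2), 100 / (L n) ^ 4 * (1 / 5) ^ k)
        ≤ ∑' k : ℕ, 100 / (L n) ^ 4 * (1 / 5) ^ k :=
      Summable.sum_le_tsum _ (fun i _ => by positivity) hgeo2
    have h3 : (∑' k : ℕ, 100 / (L n) ^ 4 * (1 / 5) ^ k) = 125 / (L n) ^ 4 := by
      rw [tsum_mul_left, tsum_geometric_of_lt_one (by norm_num) (by norm_num)]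
      norm_num
      ring
    linarith
  -- the upper bound for every finite product
  have hT : (0:ℝ) < 125 / (L n) ^ 4 := div_pos (by norm_num) hy4
  have hThalf : 125 / (L n) ^ 4 ≤ 1 / 2 := by
    rw [div_le_div_iff₀ hy4 (by norm_num)]
    linarith
  have hexp : Real.exp (125 / (L n) ^ 4) ≤ 1 + 250 / (L n) ^ 4 := by
    set T := 125 / (L n) ^ 4 with hTdef
    have h1 : 1 - T ≤ Real.exp (-T) := by
      have := Real.add_one_le_exp (-T); linarith
    have h2 : Real.exp (-T) = (Real.exp T)⁻¹ := Real.exp_neg T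
    have h3 : (0:ℝ) < 1 - T := by linarith
    have h4 : Real.exp T ≤ (1 - T)⁻¹ := by
      rw [le_inv_comm₀ (Real.exp_pos T) h3, ← h2]
      exact h1
    have h5 : (1 - T)⁻¹ ≤ 1 + 2 * T := by
      rw [inv_le_iff_one_le_mul₀ h3]
      nlinarith
    calc Real.exp T ≤ (1 - T)⁻¹ := h4
      _ ≤ 1 + 2 * T := h5
      _ = 1 + 250 / (L n) ^ 4 := by rw [hTdef]; ring
  have hupper : ∀ F : Finset ℕ, (∏ k ∈ F, (1 + x k))
      ≤ (1 + x 0) * (1 + x 1) * (1 + 250 / (L n) ^ 4) := by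
    intro F
    rw [← Finset.prod_filter_mul_prod_filter_not F (fun k => k < 2)]
    have hb1 : (∏ k ∈ F.filter (fun k => k < 2), (1 + x k)) ≤ (1 + x 0) * (1 + x 1) := by
      rw [← hprodpair]
      apply prodmono
      intro k hk
      simp only [Finset.mem_filter] at hk
      simp only [Finset.mem_insert, Finset.mem_singleton]
      omega
    have hb2 : (∏ k ∈ F.filter (fun k => ¬ k < 2), (1 + x k)) ≤ 1 + 250 / (L n) ^ 4 := by
      calc (∏ k ∈ F.filter (fun k => ¬ k < 2), (1 + x k))
          ≤ ∏ k ∈ F.filter (fun k => ¬ k < 2), Real.exp (x k) :=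
            Finset.prod_le_prod (fun i _ => by linarith [hx0 i])
              (fun i _ => by linarith [Real.add_one_le_exp (x i)])
        _ = Real.exp (∑ k ∈ F.filter (fun k => ¬ k < 2), x k) := (Real.exp_sum _ _).symm
        _ ≤ Real.exp (125 / (L n) ^ 4) := Real.exp_le_exp.2 (htail F)
        _ ≤ 1 + 250 / (L n) ^ 4 := hexp
    have h01 : (0:ℝ) ≤ ∏ k ∈ F.filter (fun k => k < 2), (1 + x k) :=
      Finset.prod_nonneg (fun i _ => by linarith [hx0 i])
    have h02 : (0:ℝ) ≤ ∏ k ∈ F.filter (fun k => ¬ k < 2), (1 + x k) :=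
      Finset.prod_nonneg (fun i _ => by linarith [hx0 i])
    have hlo0 : (0:ℝ) ≤ (1 + x 0) * (1 + x 1) := by nlinarith [hx0 0, hx0 1]
    calc (∏ k ∈ F.filter (fun k => k < 2), (1 + x k))
          * ∏ k ∈ F.filter (fun k => ¬ k < 2), (1 + x k)
        ≤ ((1 + x 0) * (1 + x 1)) * ∏ k ∈ F.filter (fun k => ¬ k < 2), (1 + x k) :=
          mul_le_mul_of_nonneg_right hb1 h02
      _ ≤ ((1 + x 0) * (1 + x 1)) * (1 + 250 / (L n) ^ 4) :=
          mul_le_mul_of_nonneg_left hb2 hlo0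
  have hPhi : (∏' k : ℕ, (1 + x k))
      ≤ (1 + x 0) * (1 + x 1) * (1 + 250 / (L n) ^ 4) :=
    hasProd_le_of_prod_le hmul.hasProd hupper
  -- identify x 0 and x 1
  have hx0eq : x 0 = 4 / (2 - L n) := by simp [hxdef]
  have hx1eq : x 1 = 4 / (2 - L n * (5 - L n)) := by
    simp only [hxdef, Nat.cast_one]
    rw [hLrec n]
  constructor
  · rw [← hx0eq, ← hx1eq]; exact hPlo
  · rw [← hx0eq, ← hx1eq]; exact hPhi

set_option maxHeartbeats 1000000 in
theorem lambda_mul_e_tendsto_neg_one (L : ℤ → ℝ) (hLneg : ∀ n, L n < 0)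
    (hLrec : ∀ n, L (n - 1) = L n * (5 - L n))
    (hLbot : Filter.Tendsto L Filter.atBot Filter.atBot) :
    Filter.Tendsto
      (fun n : ℤ =>
        L n * ((1 - L n / 4) - (-(L n) / 4) * ∏' k : ℕ, (1 + 4 / (2 - L (n - k)))))
      Filter.atBot (nhds (-1)) := by
  have hev : ∀ᶠ n in atBot, L n ≤ -5 := hLbot.eventually_le_atBot (-5)
  -- key squeeze bounds
  have key : ∀ n : ℤ, L n ≤ -5 →
      phiAux ((L n)⁻¹)
        ≤ L n * ((1 - L n / 4) - (-(L n) / 4) * ∏' k : ℕ, (1 + 4 / (2 - L (n - k))))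
      ∧ L n * ((1 - L n / 4) - (-(L n) / 4) * ∏' k : ℕ, (1 + 4 / (2 - L (n - k))))
        ≤ phiAux ((L n)⁻¹) + 250 * ((L n)⁻¹) ^ 2 := by
    intro n hn
    obtain ⟨hlo, hhi⟩ := key_bounds L hLneg hLrec n hn
    have hyneg : L n < 0 := hLneg n
    have h25 : (25 : ℝ) ≤ (L n) ^ 2 := by nlinarith
    have h625 : (625 : ℝ) ≤ (L n) ^ 4 := by nlinarith [sq_nonneg ((L n) ^ 2 - 25)]
    have hy2 : (0:ℝ) < (L n) ^ 2 := by linarith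
    have hy4 : (0:ℝ) < (L n) ^ 4 := by linarith
    set P := ∏' k : ℕ, (1 + 4 / (2 - L (n - (k : ℤ)))) with hPdef
    set lo := (1 + 4 / (2 - L n)) * (1 + 4 / (2 - L n * (5 - L n))) with hlodef
    have hE : L n * ((1 - L n / 4) - (-(L n) / 4) * P)
        = L n * (1 - L n / 4) + (L n) ^ 2 / 4 * P := by ring
    have hphieq := phiAux_eq hyneg
    have hinvsq : ((L n)⁻¹) ^ 2 = 1 / (L n) ^ 2 := by
      field_simp
    -- lo bounds
    have h2y : (0:ℝ) < 2 - L n := by linarith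
    have h2y2 : (0:ℝ) < 2 - L n * (5 - L n) := by nlinarith
    have hx0le : 4 / (2 - L n) ≤ 1 := by
      rw [div_le_one h2y]; linarith
    have hx1le : 4 / (2 - L n * (5 - L n)) ≤ 1 := by
      rw [div_le_one h2y2]; nlinarith
    have hx0pos : 0 < 4 / (2 - L n) := div_pos (by norm_num) h2y
    have hx1pos : 0 < 4 / (2 - L n * (5 - L n)) := div_pos (by norm_num) h2y2
    have hlo4 : lo ≤ 4 := by rw [hlodef]; nlinarith
    have hlo0 : 0 ≤ lo := by rw [hlodef]; nlinarith
    constructor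
    · rw [hE, hphieq]
      have : (L n) ^ 2 / 4 * lo ≤ (L n) ^ 2 / 4 * P :=
        mul_le_mul_of_nonneg_left hlo (by positivity)
      rw [hlodef] at this
      linarith
    · rw [hE, hphieq, hinvsq]
      have h1 : (L n) ^ 2 / 4 * P ≤ (L n) ^ 2 / 4 * (lo * (1 + 250 / (L n) ^ 4)) :=
        mul_le_mul_of_nonneg_left hhi (by positivity)
      have h2 : (L n) ^ 2 / 4 * (lo * (1 + 250 / (L n) ^ 4))
          = (L n) ^ 2 / 4 * lo + lo * (250 / 4) / (L n) ^ 2 := by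
        have hne : L n ≠ 0 := ne_of_lt hyneg
        field_simp
      have h3 : lo * (250 / 4) / (L n) ^ 2 ≤ 250 * (1 / (L n) ^ 2) := by
        rw [mul_one_div, div_le_div_iff₀ hy2 hy2]
        nlinarith
      rw [hlodef] at h1 h2 h3
      linarith
  -- limits of the bounding functions
  have hinv : Tendsto (fun n => (L n)⁻¹) atBot (nhds 0) := by
    have h1 : Tendsto (fun n => -L n) atBot atTop := tendsto_neg_atBot_atTop.comp hLbot
    have h2 : Tendsto (fun n => (-L n)⁻¹) atBot (nhds 0) := h1.inv_tendsto_atTop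
    have h3 : Tendsto (fun n => -(-L n)⁻¹) atBot (nhds (-0)) := h2.neg
    simp only [inv_neg, neg_neg, neg_zero] at h3
    exact h3
  have hcont : ContinuousAt phiAux 0 := by
    apply ContinuousAt.add
    apply ContinuousAt.add
    · exact ContinuousAt.div (by fun_prop) (by fun_prop) (by norm_num)
    · exact ContinuousAt.div (by fun_prop) (by fun_prop) (by norm_num)
    · exact ContinuousAt.div (by fun_prop) (by fun_prop) (by norm_num)
  have hphi0 : phiAux 0 = -1 := by norm_num [phiAux]
  have hA : Tendsto (fun n => phiAux ((L n)⁻¹)) atBot (nhds (-1)) := by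
    have := hcont.tendsto.comp hinv
    rwa [hphi0] at this
  have hB : Tendsto (fun n => phiAux ((L n)⁻¹) + 250 * ((L n)⁻¹) ^ 2) atBot (nhds (-1)) := by
    have h2 : Tendsto (fun n => 250 * ((L n)⁻¹) ^ 2) atBot (nhds (250 * 0 ^ 2)) :=
      ((hinv.pow 2).const_mul 250)
    have h3 := hA.add h2
    rw [show (-1:ℝ) + 250 * 0 ^ 2 = -1 by norm_num] at h3
    exact h3
  exact tendsto_of_tendsto_of_tendsto_of_le_of_le' hA hB
    (hev.mono fun n hn => (key n hn).1) (hev.mono fun n hn => (key n hn).2)
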